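/- The quantity ∇_θ H̃_θ(A) + ∑_{i=1}^d H_θ^{(i)}(A_{<i}) ∇_θ ∑_{j=1}^{i-1} log p_θ(A_j | A_{<j}), with A sampled from p_θ, is an unbiased estimator of the gradient of the entropy: its expectation under p_θ equals ∇_θ H_θ. -/

import Mathlib

open Finset

variable {m d : ℕ} {A : Fin d → Type*} [∀ i, Fintype (A i)]

/-- Conditional entropy of coordinate `i` given the prefix encoded by `a`:
`H_θ^{(i)}(a_{<i}) = -∑_b q θ i a b · log (q θ i a b)`. -/
noncomputable def condEnt (q : (Fin m → ℝ) → (i : Fin d) → ((j : Fin d) → A j) → A i → ℝ)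
    (θ : Fin m → ℝ) (i : Fin d) (a : (j : Fin d) → A j) : ℝ :=
  -∑ b : A i, q θ i a b * Real.log (q θ i a b)

section AuxLemmas
variable {E : Type*} [AddCommGroup E] [Module ℝ E]

lemma swap_sum (i : Fin d) (w : ((j : Fin d) → A j) → A i → E)
    (hw : ∀ a c b, w (Function.update a i c) b = w a b) :
    ∑ a : (j : Fin d) → A j, ∑ b : A i, w a b
      = (Fintype.card (A i)) • ∑ a : (j : Fin d) → A j, w a (a i) := by
  set φ : ((j : Fin d) → A j) × A i → ((j : Fin d) → A j) × A i :=
    fun p => (Function.update p.1 i p.2, p.1 i) with hφ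
  have hinv : Function.Involutive φ := by
    rintro ⟨a, b⟩
    simp [hφ, Function.update_idem]
  calc ∑ a : (j : Fin d) → A j, ∑ b : A i, w a b
      = ∑ p : ((j : Fin d) → A j) × A i, w p.1 p.2 := by
        rw [Fintype.sum_prod_type]
    _ = ∑ p : ((j : Fin d) → A j) × A i, w (φ p).1 (φ p).2 :=
        (Fintype.sum_bijective φ hinv.bijective _ _ (fun p => rfl)).symm
    _ = ∑ p : ((j : Fin d) → A j) × A i, w p.1 (p.1 i) := by
        refine Fintype.sum_congr _ _ (fun p => ?_)
        simp only [hφ, hw]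
    _ = (Fintype.card (A i)) • ∑ a : (j : Fin d) → A j, w a (a i) := by
        rw [Fintype.sum_prod_type]
        simp [smul_sum]

lemma peel_top (q : (Fin m → ℝ) → (i : Fin d) → ((j : Fin d) → A j) → A i → ℝ)
    (θ₀ : Fin m → ℝ) {t : ℕ} (ht : d ≤ t) (g : ((j : Fin d) → A j) → E) :
    (∏ k ∈ univ.filter (fun k : Fin d => t ≤ (k : ℕ)), Fintype.card (A k)) •
        ∑ a : (j : Fin d) → A j, (∏ k, q θ₀ k a (a k)) • g a
      = ∑ a : (j : Fin d) → A j,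
          (∏ k ∈ univ.filter (fun k : Fin d => (k : ℕ) < t), q θ₀ k a (a k)) • g a := by
  have h1 : univ.filter (fun k : Fin d => t ≤ (k : ℕ)) = (∅ : Finset (Fin d)) := by
    ext k; simp; omega
  have h2 : univ.filter (fun k : Fin d => (k : ℕ) < t) = (univ : Finset (Fin d)) := by
    ext k; simp; omega
  rw [h1, h2]
  simp

lemma peel (q : (Fin m → ℝ) → (i : Fin d) → ((j : Fin d) → A j) → A i → ℝ)
    (hdep : ∀ θ i (a b : (j : Fin d) → A j), (∀ j, j < i → a j = b j) → q θ i a = q θ i b)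
    (hsum : ∀ θ i a, ∑ b, q θ i a b = 1) (θ₀ : Fin m → ℝ) :
    ∀ (n t : ℕ), d ≤ t + n → ∀ g : ((j : Fin d) → A j) → E,
      (∀ a a' : (j : Fin d) → A j, (∀ j : Fin d, (j : ℕ) < t → a j = a' j) → g a = g a') →
      (∏ k ∈ univ.filter (fun k : Fin d => t ≤ (k : ℕ)), Fintype.card (A k)) •
          ∑ a : (j : Fin d) → A j, (∏ k, q θ₀ k a (a k)) • g a
        = ∑ a : (j : Fin d) → A j,
            (∏ k ∈ univ.filter (fun k : Fin d => (k : ℕ) < t), q θ₀ k a (a k)) • g a := by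
  intro n
  induction n with
  | zero =>
      intro t ht g hg
      exact peel_top q θ₀ (by omega) g
  | succ n ih =>
      intro t ht g hg
      by_cases hdt : d ≤ t
      · exact peel_top q θ₀ hdt g
      push_neg at hdt
      set i : Fin d := ⟨t, hdt⟩ with hi
      have hik : ∀ k : Fin d, (k : ℕ) < t → k ≠ i := by
        intro k hk; intro hke; rw [hke] at hk; simp [hi] at hk
      -- Filter splittings
      have hf1 : univ.filter (fun k : Fin d => t ≤ (k : ℕ))
          = insert i (univ.filter (fun k : Fin d => t + 1 ≤ (k : ℕ))) := by
        ext k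
        simp only [mem_insert, mem_filter, mem_univ, true_and]
        constructor
        · intro h
          rcases Nat.eq_or_lt_of_le h with h' | h'
          · left; exact Fin.ext h'.symm
          · right; omega
        · rintro (rfl | h)
          · exact le_refl _
          · omega
      have hf2 : univ.filter (fun k : Fin d => (k : ℕ) < t + 1)
          = insert i (univ.filter (fun k : Fin d => (k : ℕ) < t)) := by
        ext k
        simp only [mem_insert, mem_filter, mem_univ, true_and]
        constructor
        · intro h
          rcases Nat.lt_succ_iff_lt_or_eq.mp h with h' | h'
          · right; exact h'
          · left; exact Fin.ext h'
        · rintro (rfl | h)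
          · simp [hi]
          · omega
      have hni1 : i ∉ univ.filter (fun k : Fin d => t + 1 ≤ (k : ℕ)) := by simp [hi]
      have hni2 : i ∉ univ.filter (fun k : Fin d => (k : ℕ) < t) := by simp [hi]
      have hg' : ∀ a a' : (j : Fin d) → A j, (∀ j : Fin d, (j : ℕ) < t + 1 → a j = a' j) → g a = g a' :=
        fun a a' h => hg a a' (fun j hj => h j (by omega))
      have IH := ih (t + 1) (by omega) g hg'
      rw [hf1, prod_insert hni1, mul_smul, IH]
      -- Now: card (A i) • ∑ a, W_{t+1}(a) • g a = ∑ a, W_t(a) • g a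
      have hW : ∀ (a : (j : Fin d) → A j) (c : A i),
          (∏ k ∈ univ.filter (fun k : Fin d => (k : ℕ) < t),
              q θ₀ k (Function.update a i c) ((Function.update a i c) k))
            = ∏ k ∈ univ.filter (fun k : Fin d => (k : ℕ) < t), q θ₀ k a (a k) := by
        intro a c
        refine prod_congr rfl (fun k hk => ?_)
        simp only [mem_filter, mem_univ, true_and] at hk
        have hki : k ≠ i := hik k hk
        rw [Function.update_of_ne hki]
        have hdd : q θ₀ k (Function.update a i c) = q θ₀ k a := by
          refine hdep θ₀ k _ a (fun j hj => ?_)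
          have hji : j ≠ i := by
            intro hje; rw [hje] at hj
            have h2 : (i : ℕ) < (k : ℕ) := hj
            simp only [hi] at h2; omega
          rw [Function.update_of_ne hji]
        rw [hdd]
      have hq : ∀ (a : (j : Fin d) → A j) (c : A i) (b : A i),
          q θ₀ i (Function.update a i c) b = q θ₀ i a b := by
        intro a c b
        have := hdep θ₀ i (Function.update a i c) a (fun j hj => by
          have : j ≠ i := Fin.ne_of_lt hj
          rw [Function.update_of_ne this])
        rw [this]
      have hswap := swap_sum i
        (fun a b => ((∏ k ∈ univ.filter (fun k : Fin d => (k : ℕ) < t), q θ₀ k a (a k))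
            * q θ₀ i a b) • g a)
        (by
          intro a c b
          beta_reduce
          rw [hW a c, hq a c]
          congr 1
          refine hg _ _ (fun j hj => ?_)
          rw [Function.update_of_ne (hik j hj)])
      calc Fintype.card (A i) • ∑ a : (j : Fin d) → A j,
            (∏ k ∈ univ.filter (fun k : Fin d => (k : ℕ) < t + 1), q θ₀ k a (a k)) • g a
          = Fintype.card (A i) • ∑ a : (j : Fin d) → A j,
            ((∏ k ∈ univ.filter (fun k : Fin d => (k : ℕ) < t), q θ₀ k a (a k))
              * q θ₀ i a (a i)) • g a := by
            congr 1
            refine Fintype.sum_congr _ _ (fun a => ?_)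
            rw [hf2, prod_insert hni2, mul_comm]
        _ = ∑ a : (j : Fin d) → A j, ∑ b : A i,
            ((∏ k ∈ univ.filter (fun k : Fin d => (k : ℕ) < t), q θ₀ k a (a k))
              * q θ₀ i a b) • g a := hswap.symm
        _ = ∑ a : (j : Fin d) → A j,
            (∏ k ∈ univ.filter (fun k : Fin d => (k : ℕ) < t), q θ₀ k a (a k)) • g a := by
            refine Fintype.sum_congr _ _ (fun a => ?_)
            rw [← Finset.sum_smul, ← Finset.mul_sum, hsum θ₀ i a, mul_one]

lemma condzero [∀ i, Nonempty (A i)]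
    (q : (Fin m → ℝ) → (i : Fin d) → ((j : Fin d) → A j) → A i → ℝ)
    (hdep : ∀ θ i (a b : (j : Fin d) → A j), (∀ j, j < i → a j = b j) → q θ i a = q θ i b)
    (hsum : ∀ θ i a, ∑ b, q θ i a b = 1) (θ₀ : Fin m → ℝ) (i : Fin d)
    (g : ((j : Fin d) → A j) → E)
    (hg : ∀ a a' : (j : Fin d) → A j, (∀ j : Fin d, (j : ℕ) < (i : ℕ) + 1 → a j = a' j) → g a = g a')
    (hz : ∀ a : (j : Fin d) → A j, ∑ b, q θ₀ i a b • g (Function.update a i b) = 0) :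
    ∑ a : (j : Fin d) → A j, (∏ k, q θ₀ k a (a k)) • g a = 0 := by
  have hP := peel q hdep hsum θ₀ d ((i : ℕ) + 1) (by omega) g hg
  set t : ℕ := (i : ℕ) with hti
  have hik : ∀ k : Fin d, (k : ℕ) < t → k ≠ i := fun k hk hke => by
    rw [hke] at hk; omega
  have hf2 : univ.filter (fun k : Fin d => (k : ℕ) < t + 1)
      = insert i (univ.filter (fun k : Fin d => (k : ℕ) < t)) := by
    ext k
    simp only [mem_insert, mem_filter, mem_univ, true_and]
    constructor
    · intro h
      rcases Nat.lt_succ_iff_lt_or_eq.mp h with h' | h'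
      · right; exact h'
      · left; exact Fin.ext h'
    · rintro (rfl | h) <;> omega
  have hni2 : i ∉ univ.filter (fun k : Fin d => (k : ℕ) < t) := by simp [hti]
  have hW : ∀ (a : (j : Fin d) → A j) (c : A i),
      (∏ k ∈ univ.filter (fun k : Fin d => (k : ℕ) < t),
          q θ₀ k (Function.update a i c) ((Function.update a i c) k))
        = ∏ k ∈ univ.filter (fun k : Fin d => (k : ℕ) < t), q θ₀ k a (a k) := by
    intro a c
    refine prod_congr rfl (fun k hk => ?_)
    simp only [mem_filter, mem_univ, true_and] at hk
    have hki : k ≠ i := hik k hk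
    rw [Function.update_of_ne hki]
    have hdd : q θ₀ k (Function.update a i c) = q θ₀ k a := by
      refine hdep θ₀ k _ a (fun j hj => ?_)
      have hji : j ≠ i := by
        intro hje; rw [hje] at hj
        have h2 : (i : ℕ) < (k : ℕ) := hj
        omega
      rw [Function.update_of_ne hji]
    rw [hdd]
  have hq : ∀ (a : (j : Fin d) → A j) (c : A i) (b : A i),
      q θ₀ i (Function.update a i c) b = q θ₀ i a b := by
    intro a c b
    have := hdep θ₀ i (Function.update a i c) a (fun j hj => by
      rw [Function.update_of_ne (Fin.ne_of_lt hj)])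
    rw [this]
  have hswap := swap_sum i
    (fun a b => ((∏ k ∈ univ.filter (fun k : Fin d => (k : ℕ) < t), q θ₀ k a (a k))
        * q θ₀ i a b) • g (Function.update a i b))
    (by
      intro a c b
      beta_reduce
      rw [hW a c, hq a c, Function.update_idem])
  have hz' : ∑ a : (j : Fin d) → A j, ∑ b : A i,
      ((∏ k ∈ univ.filter (fun k : Fin d => (k : ℕ) < t), q θ₀ k a (a k))
        * q θ₀ i a b) • g (Function.update a i b) = 0 := by
    refine Finset.sum_eq_zero (fun a _ => ?_)
    have : ∀ b : A i, ((∏ k ∈ univ.filter (fun k : Fin d => (k : ℕ) < t), q θ₀ k a (a k))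
          * q θ₀ i a b) • g (Function.update a i b)
        = (∏ k ∈ univ.filter (fun k : Fin d => (k : ℕ) < t), q θ₀ k a (a k)) •
            (q θ₀ i a b • g (Function.update a i b)) := fun b => by rw [mul_smul]
    rw [Finset.sum_congr rfl (fun b _ => this b), ← smul_sum, hz a, smul_zero]
  have hmid : ∑ a : (j : Fin d) → A j,
      (∏ k ∈ univ.filter (fun k : Fin d => (k : ℕ) < t + 1), q θ₀ k a (a k)) • g a = 0 := by
    have hcard : (Fintype.card (A i) : ℝ) ≠ 0 := by
      exact_mod_cast Fintype.card_ne_zero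
    have h0 : Fintype.card (A i) • ∑ a : (j : Fin d) → A j,
        ((∏ k ∈ univ.filter (fun k : Fin d => (k : ℕ) < t), q θ₀ k a (a k))
          * q θ₀ i a (a i)) • g (Function.update a i (a i)) = 0 := by
      rw [← hswap, hz']
    have h1 : ∑ a : (j : Fin d) → A j,
        ((∏ k ∈ univ.filter (fun k : Fin d => (k : ℕ) < t), q θ₀ k a (a k))
          * q θ₀ i a (a i)) • g (Function.update a i (a i)) = 0 := by
      rw [← Nat.cast_smul_eq_nsmul ℝ] at h0
      exact (smul_eq_zero.mp h0).resolve_left hcard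
    rw [← h1]
    refine Fintype.sum_congr _ _ (fun a => ?_)
    rw [hf2, prod_insert hni2, mul_comm, Function.update_eq_self]
  rw [hmid] at hP
  have hM : ((∏ k ∈ univ.filter (fun k : Fin d => t + 1 ≤ (k : ℕ)), Fintype.card (A k) : ℕ) : ℝ) ≠ 0 := by
    exact_mod_cast Finset.prod_ne_zero_iff.mpr (fun k _ => Fintype.card_ne_zero)
  rw [← Nat.cast_smul_eq_nsmul ℝ] at hP
  exact (smul_eq_zero.mp hP).resolve_left hM

lemma pull_cond [∀ i, Nonempty (A i)]
    (q : (Fin m → ℝ) → (i : Fin d) → ((j : Fin d) → A j) → A i → ℝ)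
    (hdep : ∀ θ i (a b : (j : Fin d) → A j), (∀ j, j < i → a j = b j) → q θ i a = q θ i b)
    (hsum : ∀ θ i a, ∑ b, q θ i a b = 1) (θ₀ : Fin m → ℝ) (i : Fin d)
    (h : ((j : Fin d) → A j) → A i → E)
    (hh : ∀ (a a' : (j : Fin d) → A j) b, (∀ j : Fin d, j < i → a j = a' j) → h a b = h a' b) :
    ∑ a : (j : Fin d) → A j, (∏ k, q θ₀ k a (a k)) • (∑ b, q θ₀ i a b • h a b)
      = ∑ a : (j : Fin d) → A j, (∏ k, q θ₀ k a (a k)) • h a (a i) := by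
  have key := condzero q hdep hsum θ₀ i
    (fun a => (∑ b, q θ₀ i a b • h a b) - h a (a i))
    (by
      intro a a' hagree
      have h1 : q θ₀ i a = q θ₀ i a' :=
        hdep θ₀ i a a' (fun j hj => hagree j (by omega))
      have h2 : ∀ b, h a b = h a' b := fun b =>
        hh a a' b (fun j hj => hagree j (by have : (j:ℕ) < (i:ℕ) := hj; omega))
      have h3 : a i = a' i := hagree i (by omega)
      simp only [h1, h3]
      rw [Finset.sum_congr rfl (fun b _ => by rw [h2 b]), h2])
    (by
      intro a
      have hrw : ∀ b : A i, (fun a => (∑ b, q θ₀ i a b • h a b) - h a (a i)) (Function.update a i b)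
          = (∑ c, q θ₀ i a c • h a c) - h a b := by
        intro b
        simp only []
        have hq' : q θ₀ i (Function.update a i b) = q θ₀ i a :=
          hdep θ₀ i _ a (fun j hj => Function.update_of_ne (Fin.ne_of_lt hj) _ a)
        have hh' : ∀ c, h (Function.update a i b) c = h a c := fun c =>
          hh _ a c (fun j hj => Function.update_of_ne (Fin.ne_of_lt hj) _ a)
        rw [Function.update_self]
        rw [Finset.sum_congr rfl (fun c _ => by rw [hq', hh' c]), hh' b]
      rw [Finset.sum_congr rfl (fun b _ => by beta_reduce at hrw; rw [hrw b])]
      have : ∑ b : A i, q θ₀ i a b • ((∑ c, q θ₀ i a c • h a c) - h a b)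
          = (∑ b : A i, q θ₀ i a b) • (∑ c, q θ₀ i a c • h a c)
            - ∑ b : A i, q θ₀ i a b • h a b := by
        rw [Finset.sum_smul, ← Finset.sum_sub_distrib]
        exact Finset.sum_congr rfl (fun b _ => by rw [smul_sub])
      rw [this, hsum, one_smul, sub_self])
  have expand : ∑ a : (j : Fin d) → A j, (∏ k, q θ₀ k a (a k)) •
      ((∑ b, q θ₀ i a b • h a b) - h a (a i))
      = ∑ a : (j : Fin d) → A j, (∏ k, q θ₀ k a (a k)) • (∑ b, q θ₀ i a b • h a b)
        - ∑ a : (j : Fin d) → A j, (∏ k, q θ₀ k a (a k)) • h a (a i) := by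
    rw [← Finset.sum_sub_distrib]
    exact Finset.sum_congr rfl (fun a _ => by rw [smul_sub])
  rw [expand] at key
  exact sub_eq_zero.mp key

end AuxLemmas

set_option maxHeartbeats 1600000

/-- The quantity
`∇_θ H̃_θ(A) + ∑_i H_θ^{(i)}(A_{<i}) ∇_θ ∑_{j<i} log p_θ(A_j | A_{<j})`,
with `A ∼ p_θ` and `H̃_θ(a) = ∑_i H_θ^{(i)}(a_{<i})`, is an unbiased estimator of the
gradient of the entropy `H_θ = -∑_a p_θ(a) log p_θ(a)`, where
`p_θ(a) = ∏_k q θ k a (a k)`. -/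
theorem unbiased_entropy_gradient_estimator [∀ i, Nonempty (A i)]
    (q : (Fin m → ℝ) → (i : Fin d) → ((j : Fin d) → A j) → A i → ℝ)
    (hdep : ∀ θ i (a b : (j : Fin d) → A j), (∀ j, j < i → a j = b j) → q θ i a = q θ i b)
    (hpos : ∀ θ i a b, 0 < q θ i a b)
    (hsum : ∀ θ i a, ∑ b, q θ i a b = 1)
    (hdiff : ∀ i a b, Differentiable ℝ (fun θ => q θ i a b))
    (θ₀ : Fin m → ℝ) :
    ∑ a : (k : Fin d) → A k, (∏ k, q θ₀ k a (a k)) •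
        (fderiv ℝ (fun θ => ∑ i : Fin d, condEnt q θ i a) θ₀ +
          ∑ i : Fin d, condEnt q θ₀ i a •
            fderiv ℝ (fun θ => ∑ j ∈ Finset.univ.filter (· < i),
              Real.log (q θ j a (a j))) θ₀) =
      fderiv ℝ (fun θ => -∑ a : (k : Fin d) → A k,
        (∏ k, q θ k a (a k)) * Real.log (∏ k, q θ k a (a k))) θ₀ := by
  classical
  have hne : ∀ θ i (a : (j : Fin d) → A j) b, q θ i a b ≠ 0 := fun θ i a b => (hpos θ i a b).ne'
  set Dq : (i : Fin d) → ((j : Fin d) → A j) → A i → ((Fin m → ℝ) →L[ℝ] ℝ) :=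
    fun i a b => fderiv ℝ (fun θ => q θ i a b) θ₀ with hDq
  have hD : ∀ i (a : (j : Fin d) → A j) b, HasFDerivAt (fun θ => q θ i a b) (Dq i a b) θ₀ :=
    fun i a b => (hdiff i a b).differentiableAt.hasFDerivAt
  have hDsum : ∀ i (a : (j : Fin d) → A j), ∑ b, Dq i a b = 0 := by
    intro i a
    have h1 : HasFDerivAt (fun θ => ∑ b, q θ i a b) (∑ b, Dq i a b) θ₀ :=
      HasFDerivAt.fun_sum (fun b _ => hD i a b)
    have h2 : (fun θ : Fin m → ℝ => ∑ b, q θ i a b) = fun _ => (1 : ℝ) :=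
      funext (fun θ => hsum θ i a)
    rw [h2] at h1
    exact h1.unique (hasFDerivAt_const 1 θ₀)
  have hDdep : ∀ (i : Fin d) (a a' : (j : Fin d) → A j) b, (∀ j, j < i → a j = a' j) →
      Dq i a b = Dq i a' b := by
    intro i a a' b h
    simp only [hDq]
    congr 1
    exact funext (fun θ => congrFun (hdep θ i a a' h) b)
  set S : (j : Fin d) → ((k : Fin d) → A k) → ((Fin m → ℝ) →L[ℝ] ℝ) :=
    fun j a => (q θ₀ j a (a j))⁻¹ • Dq j a (a j) with hS
  set P : ((k : Fin d) → A k) → ℝ := fun a => ∏ k, q θ₀ k a (a k) with hPdef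
  have hPpos : ∀ a, 0 < P a := fun a => Finset.prod_pos (fun k _ => hpos θ₀ k a (a k))
  -- derivative of the smoothed-entropy sum
  have hCE : ∀ a : (k : Fin d) → A k,
      fderiv ℝ (fun θ => ∑ i : Fin d, condEnt q θ i a) θ₀
        = ∑ i : Fin d, -∑ b : A i, Real.log (q θ₀ i a b) • Dq i a b := by
    intro a
    have hterm : ∀ (i : Fin d) (b : A i),
        HasFDerivAt (fun θ => q θ i a b * Real.log (q θ i a b))
          (Real.log (q θ₀ i a b) • Dq i a b + Dq i a b) θ₀ := by
      intro i b
      have h1 := (hD i a b).mul ((hD i a b).log (hne θ₀ i a b))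
      have h2 : q θ₀ i a b • ((q θ₀ i a b)⁻¹ • Dq i a b) = Dq i a b := by
        rw [smul_smul, mul_inv_cancel₀ (hne θ₀ i a b), one_smul]
      rw [h2] at h1
      rwa [add_comm] at h1
    have hCEi : ∀ i : Fin d, HasFDerivAt (fun θ => condEnt q θ i a)
        (-∑ b : A i, (Real.log (q θ₀ i a b) • Dq i a b + Dq i a b)) θ₀ := by
      intro i
      exact (HasFDerivAt.fun_sum (fun b (_ : b ∈ univ) => hterm i b)).neg
    have hsumCE : HasFDerivAt (fun θ => ∑ i : Fin d, condEnt q θ i a)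
        (∑ i : Fin d, -∑ b : A i, (Real.log (q θ₀ i a b) • Dq i a b + Dq i a b)) θ₀ :=
      HasFDerivAt.fun_sum (fun i _ => hCEi i)
    rw [hsumCE.fderiv]
    refine Finset.sum_congr rfl (fun i _ => ?_)
    rw [Finset.sum_add_distrib, hDsum i a, add_zero]
  -- derivative of the prefix log-likelihood
  have hLOG : ∀ (a : (k : Fin d) → A k) (i : Fin d),
      fderiv ℝ (fun θ => ∑ j ∈ Finset.univ.filter (· < i), Real.log (q θ j a (a j))) θ₀
        = ∑ j ∈ Finset.univ.filter (· < i), S j a := by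
    intro a i
    have h1 : HasFDerivAt (fun θ => ∑ j ∈ Finset.univ.filter (· < i), Real.log (q θ j a (a j)))
        (∑ j ∈ Finset.univ.filter (· < i), (q θ₀ j a (a j))⁻¹ • Dq j a (a j)) θ₀ :=
      HasFDerivAt.fun_sum (fun j _ => (hD j a (a j)).log (hne θ₀ j a (a j)))
    exact h1.fderiv
  -- derivative of the product (likelihood)
  have hDP : ∀ a : (k : Fin d) → A k, HasFDerivAt (fun θ => ∏ k, q θ k a (a k))
      (P a • ∑ j, S j a) θ₀ := by
    intro a
    have h1 := HasFDerivAt.finset_prod (u := univ) (g := fun k θ => q θ k a (a k))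
      (g' := fun k => Dq k a (a k)) (fun k _ => hD k a (a k))
    have h2 : (∑ k, (∏ l ∈ univ.erase k, q θ₀ l a (a l)) • Dq k a (a k)) = P a • ∑ j, S j a := by
      rw [smul_sum]
      refine Finset.sum_congr rfl (fun k _ => ?_)
      have h3 : (∏ l ∈ univ.erase k, q θ₀ l a (a l)) = P a * (q θ₀ k a (a k))⁻¹ := by
        have h4 := Finset.mul_prod_erase univ (fun l => q θ₀ l a (a l)) (mem_univ k)
        simp only [hPdef]
        rw [eq_mul_inv_iff_mul_eq₀ (hne θ₀ k a (a k)), mul_comm]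
        simpa using h4
      rw [h3, mul_smul]
    rwa [h2] at h1
  -- derivative of the RHS (entropy)
  have hterm : ∀ a : (k : Fin d) → A k,
      HasFDerivAt (fun θ => (∏ k, q θ k a (a k)) * Real.log (∏ k, q θ k a (a k)))
        (Real.log (P a) • (P a • ∑ j, S j a) + P a • ∑ j, S j a) θ₀ := by
    intro a
    have h1 := (hDP a).mul ((hDP a).log (hPpos a).ne')
    have h2 : (∏ k, q θ₀ k a (a k)) • ((∏ k, q θ₀ k a (a k))⁻¹ • (P a • ∑ j, S j a))
        = P a • ∑ j, S j a := by
      rw [smul_smul, mul_inv_cancel₀ (hPpos a).ne', one_smul]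
    rw [h2] at h1
    rwa [add_comm] at h1
  have hRHS : fderiv ℝ (fun θ => -∑ a : (k : Fin d) → A k,
      (∏ k, q θ k a (a k)) * Real.log (∏ k, q θ k a (a k))) θ₀
      = -∑ a : (k : Fin d) → A k,
          (Real.log (P a) • (P a • ∑ j, S j a) + P a • ∑ j, S j a) :=
    ((HasFDerivAt.fun_sum (fun a (_ : a ∈ univ) => hterm a)).neg).fderiv
  -- invariance of the score
  have hSdep : ∀ (j : Fin d) (a a' : (k : Fin d) → A k), (∀ l : Fin d, l ≤ j → a l = a' l) →
      S j a = S j a' := by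
    intro j a a' hag
    have hlt : ∀ l, l < j → a l = a' l := fun l hl => hag l (le_of_lt hl)
    have h2 : a j = a' j := hag j le_rfl
    simp only [hS]
    rw [h2, hdep θ₀ j a a' hlt, hDdep j a a' (a' j) hlt]
  -- zero-mean scores against earlier-measurable weights
  have Z : ∀ (j : Fin d) (c : ((k : Fin d) → A k) → ℝ),
      (∀ a a' : (k : Fin d) → A k, (∀ l : Fin d, l < j → a l = a' l) → c a = c a') →
      ∑ a : (k : Fin d) → A k, P a • (c a • S j a) = 0 := by
    intro j c hc
    refine condzero q hdep hsum θ₀ j (fun a => c a • S j a) ?_ ?_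
    · intro a a' hag
      have hagf : ∀ l : Fin d, l ≤ j → a l = a' l := fun l hl => by
        refine hag l ?_
        have := Fin.le_def.mp hl
        omega
      have h1 : c a = c a' := hc a a' (fun l hl => hagf l (le_of_lt hl))
      beta_reduce
      rw [h1, hSdep j a a' hagf]
    · intro a
      beta_reduce
      have hrw : ∀ b : A j, c (Function.update a j b) • S j (Function.update a j b)
          = c a • ((q θ₀ j a b)⁻¹ • Dq j a b) := by
        intro b
        have hca : c (Function.update a j b) = c a :=
          hc _ a (fun l hl => Function.update_of_ne (Fin.ne_of_lt hl) _ a)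
        have hqa : q θ₀ j (Function.update a j b) = q θ₀ j a :=
          hdep θ₀ j _ a (fun l hl => Function.update_of_ne (Fin.ne_of_lt hl) _ a)
        have hda : Dq j (Function.update a j b) b = Dq j a b :=
          hDdep j _ a b (fun l hl => Function.update_of_ne (Fin.ne_of_lt hl) _ a)
        simp only [hS]
        rw [Function.update_self, hca, hqa, hda]
      rw [Finset.sum_congr rfl (fun b _ => by rw [hrw b])]
      have hstep : ∀ b : A j, q θ₀ j a b • (c a • ((q θ₀ j a b)⁻¹ • Dq j a b))
          = c a • Dq j a b := by
        intro b
        rw [smul_smul, smul_smul]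
        congr 1
        rw [mul_comm (q θ₀ j a b) (c a), mul_assoc, mul_inv_cancel₀ (hne θ₀ j a b), mul_one]
      rw [Finset.sum_congr rfl (fun b _ => hstep b), ← smul_sum, hDsum j a, smul_zero]
  have Z1 : ∀ j : Fin d, ∑ a : (k : Fin d) → A k, P a • S j a = 0 := by
    intro j
    have := Z j (fun _ => (1 : ℝ)) (fun _ _ _ => rfl)
    simpa [one_smul] using this
  -- the common building block
  set X : Fin d → Fin d → ((Fin m → ℝ) →L[ℝ] ℝ) :=
    fun i j => ∑ a : (k : Fin d) → A k, P a • (Real.log (q θ₀ i a (a i)) • S j a) with hXdef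
  -- E1
  have E1 : ∀ i : Fin d,
      ∑ a : (k : Fin d) → A k, P a • (-∑ b : A i, Real.log (q θ₀ i a b) • Dq i a b)
        = -(X i i) := by
    intro i
    have hp : ∑ a : (k : Fin d) → A k, P a •
          (∑ b : A i, q θ₀ i a b • (Real.log (q θ₀ i a b) • ((q θ₀ i a b)⁻¹ • Dq i a b)))
        = ∑ a : (k : Fin d) → A k, P a •
          (Real.log (q θ₀ i a (a i)) • ((q θ₀ i a (a i))⁻¹ • Dq i a (a i))) :=
      pull_cond q hdep hsum θ₀ i
        (fun a b => Real.log (q θ₀ i a b) • ((q θ₀ i a b)⁻¹ • Dq i a b))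
        (by
          intro a a' b hag
          have h1 : q θ₀ i a b = q θ₀ i a' b := congrFun (hdep θ₀ i a a' hag) b
          have h2 : Dq i a b = Dq i a' b := hDdep i a a' b hag
          beta_reduce
          rw [h1, h2])
    have hinner : ∀ (a : (k : Fin d) → A k) (b : A i),
        Real.log (q θ₀ i a b) • Dq i a b
          = q θ₀ i a b • (Real.log (q θ₀ i a b) • ((q θ₀ i a b)⁻¹ • Dq i a b)) := by
      intro a b
      rw [smul_smul, smul_smul]
      congr 1
      rw [mul_comm (q θ₀ i a b) (Real.log (q θ₀ i a b)), mul_assoc,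
        mul_inv_cancel₀ (hne θ₀ i a b), mul_one]
    calc ∑ a : (k : Fin d) → A k, P a • (-∑ b : A i, Real.log (q θ₀ i a b) • Dq i a b)
        = -∑ a : (k : Fin d) → A k, P a •
            (∑ b : A i, q θ₀ i a b • (Real.log (q θ₀ i a b) • ((q θ₀ i a b)⁻¹ • Dq i a b))) := by
          rw [← Finset.sum_neg_distrib]
          refine Finset.sum_congr rfl (fun a _ => ?_)
          have hXY : ∑ b : A i, Real.log (q θ₀ i a b) • Dq i a b
              = ∑ b : A i, q θ₀ i a b • (Real.log (q θ₀ i a b) • ((q θ₀ i a b)⁻¹ • Dq i a b)) :=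
            Finset.sum_congr rfl (fun b _ => hinner a b)
          rw [hXY, smul_neg]
      _ = -(X i i) := by rw [hp]
  -- E2
  have E2 : ∀ i j : Fin d, j < i →
      ∑ a : (k : Fin d) → A k, P a • (condEnt q θ₀ i a • S j a) = -(X i j) := by
    intro i j hji
    have hp : ∑ a : (k : Fin d) → A k, P a •
          (∑ b : A i, q θ₀ i a b • (Real.log (q θ₀ i a b) • S j a))
        = ∑ a : (k : Fin d) → A k, P a • (Real.log (q θ₀ i a (a i)) • S j a) :=
      pull_cond q hdep hsum θ₀ i (fun a b => Real.log (q θ₀ i a b) • S j a)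
        (by
          intro a a' b hag
          have h1 : q θ₀ i a b = q θ₀ i a' b := congrFun (hdep θ₀ i a a' hag) b
          have h2 : S j a = S j a' := hSdep j a a' (fun l hl => hag l (lt_of_le_of_lt hl hji))
          beta_reduce
          rw [h1, h2])
    calc ∑ a : (k : Fin d) → A k, P a • (condEnt q θ₀ i a • S j a)
        = -∑ a : (k : Fin d) → A k, P a •
            (∑ b : A i, q θ₀ i a b • (Real.log (q θ₀ i a b) • S j a)) := by
          rw [← Finset.sum_neg_distrib]
          refine Finset.sum_congr rfl (fun a _ => ?_)
          have hHS : condEnt q θ₀ i a • S j a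
              = -(∑ b : A i, q θ₀ i a b • (Real.log (q θ₀ i a b) • S j a)) := by
            simp only [condEnt]
            rw [neg_smul (∑ b : A i, q θ₀ i a b * Real.log (q θ₀ i a b)) (S j a),
              Finset.sum_smul]
            congr 1
            exact Finset.sum_congr rfl (fun b _ => (smul_smul _ _ _).symm)
          rw [hHS, smul_neg]
      _ = -(X i j) := by rw [hp]
  -- zero terms for strictly later scores
  have Zlate : ∀ i j : Fin d, i < j → X i j = 0 := by
    intro i j hij
    refine Z j (fun a => Real.log (q θ₀ i a (a i))) ?_
    intro a a' hag
    beta_reduce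
    rw [hdep θ₀ i a a' (fun l hl => hag l (lt_trans hl hij)), hag i hij]
  -- assemble the left-hand side
  have hL : ∑ a : (k : Fin d) → A k, (∏ k, q θ₀ k a (a k)) •
        (fderiv ℝ (fun θ => ∑ i : Fin d, condEnt q θ i a) θ₀ +
          ∑ i : Fin d, condEnt q θ₀ i a •
            fderiv ℝ (fun θ => ∑ j ∈ Finset.univ.filter (· < i),
              Real.log (q θ j a (a j))) θ₀)
      = ∑ i : Fin d, -(X i i) + ∑ i : Fin d, ∑ j ∈ Finset.univ.filter (· < i), -(X i j) := by
    calc ∑ a : (k : Fin d) → A k, (∏ k, q θ₀ k a (a k)) •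
          (fderiv ℝ (fun θ => ∑ i : Fin d, condEnt q θ i a) θ₀ +
            ∑ i : Fin d, condEnt q θ₀ i a •
              fderiv ℝ (fun θ => ∑ j ∈ Finset.univ.filter (· < i),
                Real.log (q θ j a (a j))) θ₀)
        = ∑ a : (k : Fin d) → A k, P a •
            ((∑ i : Fin d, -∑ b : A i, Real.log (q θ₀ i a b) • Dq i a b) +
              ∑ i : Fin d, condEnt q θ₀ i a • ∑ j ∈ Finset.univ.filter (· < i), S j a) := by
          refine Finset.sum_congr rfl (fun a _ => ?_)
          have hli : ∀ i : Fin d, condEnt q θ₀ i a •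
                fderiv ℝ (fun θ => ∑ j ∈ Finset.univ.filter (· < i),
                  Real.log (q θ j a (a j))) θ₀
              = condEnt q θ₀ i a • ∑ j ∈ Finset.univ.filter (· < i), S j a := fun i => by
            rw [hLOG a i]
          rw [hCE a, Finset.sum_congr rfl (fun i _ => hli i)]
      _ = ∑ a : (k : Fin d) → A k, (∑ i : Fin d, P a • (-∑ b : A i, Real.log (q θ₀ i a b) • Dq i a b))
          + ∑ a : (k : Fin d) → A k, ∑ i : Fin d, ∑ j ∈ Finset.univ.filter (· < i),
              P a • (condEnt q θ₀ i a • S j a) := by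
          rw [← Finset.sum_add_distrib]
          refine Finset.sum_congr rfl (fun a _ => ?_)
          rw [smul_add]
          congr 1
          · exact smul_sum
          · rw [smul_sum]
            exact Finset.sum_congr rfl (fun i _ => by rw [smul_sum, smul_sum])
      _ = ∑ i : Fin d, -(X i i) + ∑ i : Fin d, ∑ j ∈ Finset.univ.filter (· < i), -(X i j) := by
          congr 1
          · rw [Finset.sum_comm]
            exact Finset.sum_congr rfl (fun i _ => E1 i)
          · rw [Finset.sum_comm]
            refine Finset.sum_congr rfl (fun i _ => ?_)
            rw [Finset.sum_comm]
            refine Finset.sum_congr rfl (fun j hj => ?_)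
            have hji : j < i := by simpa using hj
            exact E2 i j hji
  -- assemble the right-hand side
  have hlogP : ∀ a : (k : Fin d) → A k,
      Real.log (P a) = ∑ i : Fin d, Real.log (q θ₀ i a (a i)) := by
    intro a
    exact Real.log_prod (s := univ) (fun k _ => hne θ₀ k a (a k))
  have hnotsplit : ∀ i : Fin d, univ.filter (fun j : Fin d => ¬ j < i)
      = insert i (univ.filter (fun j : Fin d => i < j)) := by
    intro i
    ext j
    simp only [mem_insert, mem_filter, mem_univ, true_and, not_lt]
    constructor
    · intro h
      rcases lt_or_eq_of_le h with h' | h'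
      · right; exact h'
      · left; exact h'.symm
    · rintro (rfl | h)
      · exact le_refl _
      · exact le_of_lt h
  have hR : fderiv ℝ (fun θ => -∑ a : (k : Fin d) → A k,
        (∏ k, q θ k a (a k)) * Real.log (∏ k, q θ k a (a k))) θ₀
      = -(∑ i : Fin d, (∑ j ∈ Finset.univ.filter (· < i), X i j + X i i)) := by
    rw [hRHS]
    have hmain : ∑ a : (k : Fin d) → A k,
        (Real.log (P a) • (P a • ∑ j, S j a) + P a • ∑ j, S j a)
        = ∑ i : Fin d, (∑ j ∈ Finset.univ.filter (· < i), X i j + X i i) := by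
      rw [Finset.sum_add_distrib]
      have hzero : ∑ a : (k : Fin d) → A k, P a • ∑ j, S j a = 0 := by
        calc ∑ a : (k : Fin d) → A k, P a • ∑ j, S j a
            = ∑ a : (k : Fin d) → A k, ∑ j, P a • S j a := by
              exact Finset.sum_congr rfl (fun a _ => smul_sum)
          _ = ∑ j, ∑ a : (k : Fin d) → A k, P a • S j a := Finset.sum_comm
          _ = 0 := by
              rw [Finset.sum_congr rfl (fun j (_ : j ∈ univ) => Z1 j)]
              exact Finset.sum_const_zero
      rw [hzero, add_zero]
      calc ∑ a : (k : Fin d) → A k, Real.log (P a) • (P a • ∑ j, S j a)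
          = ∑ a : (k : Fin d) → A k, ∑ i : Fin d, ∑ j : Fin d,
              P a • (Real.log (q θ₀ i a (a i)) • S j a) := by
            refine Finset.sum_congr rfl (fun a _ => ?_)
            rw [hlogP a,
              smul_comm (∑ i : Fin d, Real.log (q θ₀ i a (a i))) (P a) (∑ j, S j a),
              Finset.sum_smul, smul_sum]
            refine Finset.sum_congr rfl (fun i _ => ?_)
            rw [smul_sum, smul_sum]
        _ = ∑ i : Fin d, ∑ j : Fin d, X i j := by
            rw [Finset.sum_comm]
            refine Finset.sum_congr rfl (fun i _ => ?_)
            rw [Finset.sum_comm]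
        _ = ∑ i : Fin d, (∑ j ∈ Finset.univ.filter (· < i), X i j + X i i) := by
            refine Finset.sum_congr rfl (fun i _ => ?_)
            rw [← Finset.sum_filter_add_sum_filter_not univ (fun j : Fin d => j < i) (X i)]
            congr 1
            rw [hnotsplit i, Finset.sum_insert (by simp)]
            have : ∑ j ∈ univ.filter (fun j : Fin d => i < j), X i j = 0 := by
              refine Finset.sum_eq_zero (fun j hj => ?_)
              exact Zlate i j (by simpa using hj)
            rw [this, add_zero]
    rw [hmain]
  rw [hL, hR]
  rw [Finset.sum_add_distrib]
  simp only [Finset.sum_neg_distrib, neg_add]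
  abel
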